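/- In the graph G' constructed from a directed graph G (as in the Hamiltonian-path-to-trail reduction), any trail of length at least 2n+1 can be modified, without decreasing its length, into a trail that starts at s and ends at t. -/

import Mathlib

/-- A trail of length `k` in the digraph with arc relation `A`: a walk along `k` arcs
with pairwise distinct arcs (vertices may repeat). -/
def TrailOn {W : Type*} (A : W → W → Prop) (k : ℕ) (v : ℕ → W) : Prop :=
  (∀ i < k, A (v i) (v (i + 1))) ∧
    ∀ i < k, ∀ j < k, (v i, v (i + 1)) = (v j, v (j + 1)) → i = j

/-- Vertices of the auxiliary graph G': `Sum.inl (v, false)` is v⁻, `Sum.inl (v, true)`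
is v⁺, `Sum.inr false` is s and `Sum.inr true` is t. -/
abbrev AuxV (V : Type*) := (V × Bool) ⊕ Bool

/-- Arcs of the auxiliary graph G': (v⁻,v⁺) for each vertex v, (u⁺,v⁻) for each arc
(u,v) of G, and (s,v⁻), (v⁺,t) for each vertex v. -/
def AuxA {V : Type*} (A : V → V → Prop) : AuxV V → AuxV V → Prop
  | Sum.inl (v, false), Sum.inl (w, true) => v = w
  | Sum.inl (u, true), Sum.inl (w, false) => A u w
  | Sum.inr false, Sum.inl (_, false) => True
  | Sum.inl (_, true), Sum.inr true => True
  | _, _ => False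

section Aux
variable {V : Type*} [Fintype V] {A : V → V → Prop}

omit [Fintype V] in
lemma no_to_s (a : AuxV V) : ¬ AuxA A a (Sum.inr false) := by
  rcases a with ⟨x, _ | _⟩ | _ | _ <;> exact fun h => h

omit [Fintype V] in
lemma no_from_t (a : AuxV V) : ¬ AuxA A (Sum.inr true) a := by
  rcases a with ⟨x, _ | _⟩ | _ | _ <;> exact fun h => h

omit [Fintype V] in
lemma s_only {k : ℕ} {v : ℕ → AuxV V} (ht : TrailOn (AuxA A) k v)
    {j : ℕ} (hj : j ≤ k) (h : v j = Sum.inr false) : j = 0 := by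
  cases j with
  | zero => rfl
  | succ i => exact absurd (h ▸ ht.1 i (by omega)) (no_to_s _)

omit [Fintype V] in
lemma t_only {k : ℕ} {v : ℕ → AuxV V} (ht : TrailOn (AuxA A) k v)
    {j : ℕ} (hj : j ≤ k) (h : v j = Sum.inr true) : j = k := by
  by_contra hne
  exact no_from_t _ (h ▸ ht.1 j (lt_of_le_of_ne hj hne))

lemma fixStart {k : ℕ} {v : ℕ → AuxV V} (hk : 2 * Fintype.card V + 1 ≤ k)
    (ht : TrailOn (AuxA A) k v) :
    ∃ (k' : ℕ) (v' : ℕ → AuxV V), k ≤ k' ∧ TrailOn (AuxA A) k' v' ∧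
      v' 0 = Sum.inr false ∧ v' k' = v k := by
  rcases h0 : v 0 with ⟨x, _ | _⟩ | _ | _
  · -- v 0 = x⁻ : prepend (s, x⁻)
    refine ⟨k + 1, fun i => match i with | 0 => Sum.inr false | j + 1 => v j,
      by omega, ⟨?_, ?_⟩, rfl, rfl⟩
    · intro i hi
      cases i with
      | zero => show AuxA A (Sum.inr false) (v 0); rw [h0]; trivial
      | succ j => exact ht.1 j (by omega)
    · intro i hi j hj heq
      cases i with
      | zero =>
        cases j with
        | zero => rfl
        | succ j =>
          exfalso
          have hvj : v j = Sum.inr false := ((Prod.ext_iff.mp heq).1).symm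
          have hj0 := s_only ht (by omega) hvj
          subst hj0
          rw [h0] at hvj
          exact nomatch hvj
      | succ i =>
        cases j with
        | zero =>
          exfalso
          have hvi : v i = Sum.inr false := (Prod.ext_iff.mp heq).1
          have hi0 := s_only ht (by omega) hvi
          subst hi0
          rw [h0] at hvi
          exact nomatch hvi
        | succ j => exact congrArg Nat.succ (ht.2 i (by omega) j (by omega) heq)
  · -- v 0 = x⁺ : reroute first arc through s
    have h1 := ht.1 0 (by omega)
    rw [h0] at h1
    obtain ⟨k0, rfl⟩ : ∃ k0, k = k0 + 1 := ⟨k - 1, by omega⟩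
    rcases h2 : v 1 with ⟨w, _ | _⟩ | _ | _
    · -- v 1 = w⁻ : replace v 0 by s
      refine ⟨k0 + 1, fun i => match i with | 0 => Sum.inr false | j + 1 => v (j + 1),
        le_refl _, ⟨?_, ?_⟩, rfl, rfl⟩
      · intro i hi
        cases i with
        | zero => show AuxA A (Sum.inr false) (v 1); rw [h2]; trivial
        | succ j => exact ht.1 (j + 1) hi
      · intro i hi j hj heq
        cases i with
        | zero =>
          cases j with
          | zero => rfl
          | succ j =>
            exfalso
            have hvj : v (j + 1) = Sum.inr false := ((Prod.ext_iff.mp heq).1).symm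
            have := s_only ht (by omega) hvj
            omega
        | succ i =>
          cases j with
          | zero =>
            exfalso
            have hvi : v (i + 1) = Sum.inr false := (Prod.ext_iff.mp heq).1
            have := s_only ht (by omega) hvi
            omega
          | succ j => exact ht.2 (i + 1) hi (j + 1) hj heq
    · rw [h2] at h1; exact h1.elim
    · rw [h2] at h1; exact h1.elim
    · -- v 1 = t : then k = 1, impossible since x : V
      exfalso
      have := t_only ht (by omega) h2
      haveI : Nonempty V := ⟨x⟩
      have := Fintype.card_pos (α := V)
      omega
  · exact ⟨k, v, le_refl _, ht, h0, rfl⟩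
  · exact absurd (h0 ▸ ht.1 0 (by omega)) (no_from_t _)

lemma fixEnd {k : ℕ} {v : ℕ → AuxV V} (hk : 2 * Fintype.card V + 1 ≤ k)
    (ht : TrailOn (AuxA A) k v) :
    ∃ (k' : ℕ) (v' : ℕ → AuxV V), k ≤ k' ∧ TrailOn (AuxA A) k' v' ∧
      v' 0 = v 0 ∧ v' k' = Sum.inr true := by
  rcases hvk : v k with ⟨y, _ | _⟩ | _ | _
  · -- v k = y⁻ : reroute last arc through t
    obtain ⟨k0, rfl⟩ : ∃ k0, k = k0 + 1 := ⟨k - 1, by omega⟩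
    have h1 := ht.1 k0 (by omega)
    rw [hvk] at h1
    rcases hk0 : v k0 with ⟨u, _ | _⟩ | _ | _
    · rw [hk0] at h1; exact h1.elim
    · -- v k0 = u⁺ : replace v (k0+1) by t
      set v' : ℕ → AuxV V := fun i => if i = k0 + 1 then Sum.inr true else v i with hv'
      have hv : ∀ m, m ≠ k0 + 1 → v' m = v m := fun m h => if_neg h
      have hvt : v' (k0 + 1) = Sum.inr true := if_pos rfl
      refine ⟨k0 + 1, v', le_refl _, ⟨?_, ?_⟩, hv 0 (by omega), hvt⟩
      · intro i hi
        by_cases hik : i = k0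
        · rw [hik, hv k0 (by omega), hvt, hk0]
          trivial
        · rw [hv i (by omega), hv (i + 1) (by omega)]
          exact ht.1 i (by omega)
      · intro i hi j hj heq
        have hA : v' i = v' j := congrArg Prod.fst heq
        have hB : v' (i + 1) = v' (j + 1) := congrArg Prod.snd heq
        by_cases hik : i = k0 <;> by_cases hjk : j = k0
        · omega
        · exfalso
          rw [hik, hvt, hv (j + 1) (by omega)] at hB
          have := t_only ht (by omega) hB.symm
          omega
        · exfalso
          rw [hjk, hvt, hv (i + 1) (by omega)] at hB
          have := t_only ht (by omega) hB
          omega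
        · rw [hv i (by omega), hv j (by omega)] at hA
          rw [hv (i + 1) (by omega), hv (j + 1) (by omega)] at hB
          exact ht.2 i hi j hj (by rw [hA, hB])
    · -- v k0 = s : then k0 = 0, k = 1, impossible
      exfalso
      have := s_only ht (by omega) hk0
      haveI : Nonempty V := ⟨y⟩
      have := Fintype.card_pos (α := V)
      omega
    · rw [hk0] at h1; exact (no_from_t _ h1).elim
  · -- v k = y⁺ : append (y⁺, t)
    set v' : ℕ → AuxV V := fun i => if i ≤ k then v i else Sum.inr true with hv'
    have hv : ∀ m, m ≤ k → v' m = v m := fun m h => if_pos h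
    have hvt : ∀ m, k < m → v' m = Sum.inr true := fun m h => if_neg (by omega)
    refine ⟨k + 1, v', by omega, ⟨?_, ?_⟩, hv 0 (by omega), hvt _ (by omega)⟩
    · intro i hi
      by_cases hik : i = k
      · rw [hik, hv k le_rfl, hvt (k + 1) (by omega), hvk]
        trivial
      · rw [hv i (by omega), hv (i + 1) (by omega)]
        exact ht.1 i (by omega)
    · intro i hi j hj heq
      have hA : v' i = v' j := congrArg Prod.fst heq
      have hB : v' (i + 1) = v' (j + 1) := congrArg Prod.snd heq
      by_cases hik : i = k <;> by_cases hjk : j = k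
      · omega
      · exfalso
        rw [hik, hvt (k + 1) (by omega), hv (j + 1) (by omega)] at hB
        have hjt := t_only ht (by omega) hB.symm
        rw [hjt, hvk] at hB
        exact nomatch hB
      · exfalso
        rw [hjk, hvt (k + 1) (by omega), hv (i + 1) (by omega)] at hB
        have hit := t_only ht (by omega) hB
        rw [hit, hvk] at hB
        exact nomatch hB
      · rw [hv i (by omega), hv j (by omega)] at hA
        rw [hv (i + 1) (by omega), hv (j + 1) (by omega)] at hB
        exact ht.2 i (by omega) j (by omega) (by rw [hA, hB])
  · -- v k = s : then k = 0, contradicting hk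
    have := s_only ht le_rfl hvk
    omega
  · exact ⟨k, v, le_refl _, ht, rfl, hvk⟩

end Aux

/-- any trail of length at least 2n+1 in G' can be modified, without
decreasing its length, into a trail that starts at s and ends at t. -/
theorem aux_trail_to_st {V : Type*} [Fintype V] (A : V → V → Prop)
    (hloop : Irreflexive A) (k : ℕ) (v : ℕ → AuxV V)
    (hk : 2 * Fintype.card V + 1 ≤ k) (ht : TrailOn (AuxA A) k v) :
    ∃ (k' : ℕ) (v' : ℕ → AuxV V), k ≤ k' ∧ TrailOn (AuxA A) k' v' ∧
      v' 0 = Sum.inr false ∧ v' k' = Sum.inr true := by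
  obtain ⟨k1, v1, hle1, ht1, hs1, -⟩ := fixStart hk ht
  obtain ⟨k2, v2, hle2, ht2, h0, hT⟩ := fixEnd (by omega) ht1
  exact ⟨k2, v2, by omega, ht2, h0.trans hs1, hT⟩
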